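/- Discrete angular momentum conservation: for any skew-symmetric matrix Θ ∈ ℝ^{3×3}, the discrete gradient of the linear field x ↦ Θx satisfies ⟨∇(Θx)⟩_i = Θ, and since Σ_i |ω_i| T_i : Θ = 0 for symmetric T_i (orthogonality of symmetric and skew-symmetric matrices) and v_i · Θ v_i = 0, the quantity Σ_i M_i v_i · Θ x_i is conserved under dx_i/dt = v_i, ρ_i dv_i/dt = ⟨div T⟩_i; equivalently Σ_i x_i × (M_i v_i) is an integral of motion. -/

import Mathlib

open scoped RealInnerProductSpace

/-- Frobenius inner product of `3×3` matrices. -/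
def frob3 (Amat Bmat : Matrix (Fin 3) (Fin 3) ℝ) : ℝ :=
  ∑ k, ∑ l, Amat k l * Bmat k l

/-- Action of a matrix `Θ` on a vector of `ℝ³`. -/
def matAct (Θ : Matrix (Fin 3) (Fin 3) ℝ) (u : EuclideanSpace ℝ (Fin 3)) :
    EuclideanSpace ℝ (Fin 3) :=
  WithLp.toLp 2 (fun k => ∑ l, Θ k l * u l)


lemma skew_apply {Θ : Matrix (Fin 3) (Fin 3) ℝ} (hΘ : Θ.transpose = -Θ) (k l : Fin 3) :
    Θ l k = -Θ k l := by
  have := congrFun (congrFun hΘ k) l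
  simpa [Matrix.transpose_apply, Matrix.neg_apply] using this

lemma sum_skew {Θ : Matrix (Fin 3) (Fin 3) ℝ} (hΘ : Θ.transpose = -Θ) (u : Fin 3 → ℝ) :
    ∑ k, ∑ l, Θ k l * (u k * u l) = 0 := by
  have h1 : (∑ k, ∑ l, Θ k l * (u k * u l)) = ∑ l, ∑ k, Θ k l * (u k * u l) :=
    Finset.sum_comm
  have h2 : (∑ l : Fin 3, ∑ k : Fin 3, Θ k l * (u k * u l))
      = -(∑ k, ∑ l, Θ k l * (u k * u l)) := by
    rw [← Finset.sum_neg_distrib]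
    refine Finset.sum_congr rfl fun k _ => ?_
    rw [← Finset.sum_neg_distrib]
    refine Finset.sum_congr rfl fun l _ => ?_
    rw [skew_apply hΘ l k]; ring
  linarith [h1.trans h2]

lemma frob3_symm_skew {S Θ : Matrix (Fin 3) (Fin 3) ℝ} (hS : S.transpose = S)
    (hΘ : Θ.transpose = -Θ) : frob3 S Θ = 0 := by
  have hSa : ∀ k l, S l k = S k l := fun k l => congrFun (congrFun hS k) l
  have h1 : frob3 S Θ = ∑ l, ∑ k, S k l * Θ k l := Finset.sum_comm
  have h2 : (∑ l : Fin 3, ∑ k : Fin 3, S k l * Θ k l) = -(frob3 S Θ) := by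
    unfold frob3
    rw [← Finset.sum_neg_distrib]
    refine Finset.sum_congr rfl fun k _ => ?_
    rw [← Finset.sum_neg_distrib]
    refine Finset.sum_congr rfl fun l _ => ?_
    rw [skew_apply hΘ l k, hSa l k]; ring
  linarith [h1.trans h2]

lemma inner_matAct (Θ : Matrix (Fin 3) (Fin 3) ℝ) (u w : EuclideanSpace ℝ (Fin 3)) :
    ⟪u, matAct Θ w⟫ = ∑ k, ∑ l, Θ k l * (u k * w l) := by
  simp only [PiLp.inner_apply, RCLike.inner_apply, conj_trivial, matAct, PiLp.toLp_apply, Finset.mul_sum, Finset.sum_mul]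
  refine Finset.sum_congr rfl fun k _ => Finset.sum_congr rfl fun l _ => by ring

/-- Discrete angular momentum conservation: for a skew-symmetric `Θ`, the discrete
gradient of `x ↦ Θx` equals `Θ`, and the quantity `∑_i M_i v_i · Θ x_i` is conserved
under `dx_i/dt = v_i`, `ρ_i dv_i/dt = ⟨div T⟩_i` with symmetric stresses `T_i`. -/
theorem discrete_angular_momentum_conservation {N : ℕ}
    (Θ : Matrix (Fin 3) (Fin 3) ℝ) (hΘ : Θ.transpose = -Θ)
    (A ρ M : Fin N → ℝ) (hApos : ∀ i, 0 < A i) (hρpos : ∀ i, 0 < ρ i)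
    (hM : ∀ i, A i * ρ i = M i)
    (x v f : Fin N → ℝ → EuclideanSpace ℝ (Fin 3))
    (T : Fin N → ℝ → Matrix (Fin 3) (Fin 3) ℝ)
    (hTsymm : ∀ i t, (T i t).transpose = T i t)
    -- seed trajectories and momentum equation
    (hx : ∀ i t, HasDerivAt (x i) (v i t) t)
    (hv : ∀ i t, HasDerivAt (v i) ((ρ i)⁻¹ • f i t) t)
    -- discrete integration by parts applied to the linear field `Θx`,
    -- using exactness of the discrete gradient on linear functions:
    (hibp : ∀ t, (∑ i, A i * ⟪f i t, matAct Θ (x i t)⟫)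
              = -(∑ i, A i * frob3 (T i t) Θ)) :
    ∀ t, (∑ i, M i * ⟪v i t, matAct Θ (x i t)⟫)
        = ∑ i, M i * ⟪v i 0, matAct Θ (x i 0)⟫ := by
  set F : ℝ → ℝ := fun t => ∑ i, M i * ⟪v i t, matAct Θ (x i t)⟫ with hF
  have hFeq : F = fun t => ∑ i, M i * ∑ k, ∑ l, Θ k l * (v i t k * x i t l) := by
    funext t
    exact Finset.sum_congr rfl fun i _ => by rw [inner_matAct]
  have hxk : ∀ i t (k : Fin 3), HasDerivAt (fun s => x i s k) (v i t k) t := by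
    intro i t k
    simpa [Function.comp_def] using ((EuclideanSpace.proj k : EuclideanSpace ℝ (Fin 3) →L[ℝ] ℝ)).hasFDerivAt.comp_hasDerivAt t (hx i t)
  have hvk : ∀ i t (k : Fin 3), HasDerivAt (fun s => v i s k) ((ρ i)⁻¹ * f i t k) t := by
    intro i t k
    have := ((EuclideanSpace.proj k : EuclideanSpace ℝ (Fin 3) →L[ℝ] ℝ)).hasFDerivAt.comp_hasDerivAt t (hv i t)
    simpa [PiLp.smul_apply, smul_eq_mul, Function.comp_def] using this
  have hderiv : ∀ t, HasDerivAt F 0 t := by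
    intro t
    have key : HasDerivAt F
        (∑ i, M i * ∑ k, ∑ l, Θ k l * (((ρ i)⁻¹ * f i t k) * x i t l + v i t k * v i t l)) t := by
      rw [hFeq]
      refine HasDerivAt.fun_sum fun i _ => ?_
      refine HasDerivAt.const_mul _ ?_
      refine HasDerivAt.fun_sum fun k _ => ?_
      refine HasDerivAt.fun_sum fun l _ => ?_
      exact ((hvk i t k).mul (hxk i t l)).const_mul _
    have hzero : (∑ i, M i * ∑ k, ∑ l,
        Θ k l * (((ρ i)⁻¹ * f i t k) * x i t l + v i t k * v i t l)) = 0 := by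
      have hterm : ∀ i, M i * ∑ k, ∑ l,
          Θ k l * (((ρ i)⁻¹ * f i t k) * x i t l + v i t k * v i t l)
          = A i * ⟪f i t, matAct Θ (x i t)⟫ := by
        intro i
        have hsplit : (∑ k, ∑ l, Θ k l * (((ρ i)⁻¹ * f i t k) * x i t l + v i t k * v i t l))
            = (ρ i)⁻¹ * (∑ k, ∑ l, Θ k l * (f i t k * x i t l))
              + ∑ k, ∑ l, Θ k l * (v i t k * v i t l) := by
          rw [Finset.mul_sum, ← Finset.sum_add_distrib]
          refine Finset.sum_congr rfl fun k _ => ?_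
          rw [Finset.mul_sum, ← Finset.sum_add_distrib]
          refine Finset.sum_congr rfl fun l _ => ?_
          ring
        rw [hsplit, sum_skew hΘ (fun j => v i t j), add_zero, inner_matAct]
        have hρ : (ρ i) ≠ 0 := (hρpos i).ne'
        have : M i * (ρ i)⁻¹ = A i := by
          rw [← hM i]; field_simp
        rw [← mul_assoc, this]
      rw [Finset.sum_congr rfl fun i _ => hterm i, hibp t, neg_eq_zero]
      exact Finset.sum_eq_zero fun i _ => by
        rw [frob3_symm_skew (hTsymm i t) hΘ, mul_zero]
    rwa [hzero] at key
  intro t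
  have hdiff : Differentiable ℝ F := fun s => (hderiv s).differentiableAt
  have hd0 : ∀ s, deriv F s = 0 := fun s => (hderiv s).deriv
  exact is_const_of_deriv_eq_zero hdiff hd0 t 0
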